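/- Approval voting is immune to destructive control by partition of candidates with the ties-eliminate rule in the unique-winner model: if p is the unique winner of approval election (C,V), then for every partition (C₁,C₂) of C, with U(Cᵢ) denoting the unique winner of subelection (Cᵢ,V) if one exists (and the empty set otherwise), p is the unique winner of the final-round approval election on candidate set U(C₁) ∪ C₂ when p ∈ C₁ implies p ∈ U(C₁), and in all cases p ends up the unique winner of the two-stage election (i.e., if p ∈ C₁ then p uniquely wins (C₁,V) and then uniquely wins (U(C₁) ∪ C₂, V); if p ∈ C₂ then p uniquely wins (U(C₁) ∪ C₂, V)). -/
import Mathlib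

open Classical

/-- Number of votes in `V` approving candidate `c`. -/
def appCount {α : Type*} (V : List (α → Bool)) (c : α) : ℕ :=
  (V.filter (fun v => v c)).length

/-- Winner set of the approval election on candidate set `C` with votes `V`. -/
noncomputable def appWinners {α : Type*} (C : Finset α) (V : List (α → Bool)) : Finset α :=
  C.filter (fun c => ∀ d ∈ C, appCount V d ≤ appCount V c)

/-- Ties-eliminate survivor set: the unique winner of `(C,V)` if there is exactly
one winner, and the empty set otherwise. -/
noncomputable def appUW {α : Type*} (C : Finset α) (V : List (α → Bool)) : Finset α :=
  if (appWinners C V).card = 1 then appWinners C V else ∅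

lemma mem_appWinners {α : Type*} {C : Finset α} {V : List (α → Bool)} {c : α} :
    c ∈ appWinners C V ↔ c ∈ C ∧ ∀ d ∈ C, appCount V d ≤ appCount V c := by
  simp [appWinners]

lemma sub_uw {α : Type*} {C : Finset α} {V : List (α → Bool)} {p : α}
    (huw : appWinners C V = {p}) {S : Finset α} (hS : S ⊆ C) (hp : p ∈ S) :
    appWinners S V = {p} := by
  have hpw : p ∈ appWinners C V := by rw [huw]; exact Finset.mem_singleton_self p
  rw [mem_appWinners] at hpw
  have hstrict : ∀ d ∈ C, d ≠ p → appCount V d < appCount V p := by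
    intro d hd hdp
    rcases lt_or_eq_of_le (hpw.2 d hd) with h | h
    · exact h
    · exfalso; apply hdp
      have : d ∈ appWinners C V := by
        rw [mem_appWinners]
        exact ⟨hd, fun e he => (hpw.2 e he).trans h.ge⟩
      rwa [huw, Finset.mem_singleton] at this
  apply Finset.ext
  intro q
  rw [mem_appWinners, Finset.mem_singleton]
  constructor
  · rintro ⟨hq, hmax⟩
    by_contra hqp
    exact absurd (hmax p hp) (not_le.mpr (hstrict q (hS hq) hqp))
  · rintro rfl
    exact ⟨hp, fun d hd => hpw.2 d (hS hd)⟩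

theorem approval_immune_dc_pc_te_uw {α : Type*} (C C₁ C₂ : Finset α)
    (V : List (α → Bool)) (p : α)
    (huw : appWinners C V = {p})
    (hcup : C₁ ∪ C₂ = C) (hdisj : C₁ ∩ C₂ = ∅) :
    (p ∈ C₁ → appWinners C₁ V = {p} ∧ p ∈ appUW C₁ V ∧
        appWinners (appUW C₁ V ∪ C₂) V = {p}) ∧
    (p ∈ C₂ → appWinners (appUW C₁ V ∪ C₂) V = {p}) := by
  have h1 : C₁ ⊆ C := hcup ▸ Finset.subset_union_left
  have h2 : C₂ ⊆ C := hcup ▸ Finset.subset_union_right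
  have hUsub : appUW C₁ V ⊆ C₁ := by
    unfold appUW
    split
    · exact Finset.filter_subset _ _
    · exact Finset.empty_subset _
  have hfinal : appUW C₁ V ∪ C₂ ⊆ C :=
    Finset.union_subset (hUsub.trans h1) h2
  constructor
  · intro hp1
    have hw1 : appWinners C₁ V = {p} := sub_uw huw h1 hp1
    have hU : appUW C₁ V = {p} := by
      unfold appUW
      rw [hw1]
      simp
    refine ⟨hw1, by rw [hU]; exact Finset.mem_singleton_self p, ?_⟩
    exact sub_uw huw hfinal (by rw [hU]; exact Finset.mem_union_left _ (Finset.mem_singleton_self p))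
  · intro hp2
    exact sub_uw huw hfinal (Finset.mem_union_right _ hp2)
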